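/- arXiv:2104.13106 — 2 statements merged into one kernel-verified Lean document; each statement's English description precedes it below -/
import Mathlib

section
/- Let μ, ν be discrete probability measures on a finite set X and c : X × X → ℝ≥0 a cost. For any p ≥ 1, W^{(∞)}_c(μ,ν) ≤ W_{c^p}(μ,ν)^{1/p} / (α_p)^{1/p}, where α_p is the minimal atom mass of the diffusive parts of any diffusive model of a trim optimal plan for the cost c^p. -/
open Finset

/-- A transportation plan between discrete measures `μ` and `ν`. -/
def IsPlan {X : Type*} [Fintype X] (μ ν : X → ℝ) (π : X → X → ℝ) : Prop :=
  (∀ x y, 0 ≤ π x y) ∧ (∀ x, ∑ y, π x y = μ x) ∧ (∀ y, ∑ x, π x y = ν y)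

/-- Total transport cost of a plan. -/
noncomputable def tcost {X : Type*} [Fintype X] (c π : X → X → ℝ) : ℝ :=
  ∑ x, ∑ y, c x y * π x y

open Classical in
/-- Support of a plan, as a finite set of pairs. -/
noncomputable def spt {X : Type*} [Fintype X] (π : X → X → ℝ) : Finset (X × X) :=
  Finset.univ.filter (fun p => π p.1 p.2 ≠ 0)

open Classical in
/-- Support of a discrete measure. -/
noncomputable def msupp {X : Type*} [Fintype X] (μ : X → ℝ) : Finset X :=
  Finset.univ.filter (fun x => μ x ≠ 0)

/-- An optimal transportation plan. -/
def IsOptimal {X : Type*} [Fintype X] (c : X → X → ℝ) (μ ν : X → ℝ) (π : X → X → ℝ) : Prop :=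
  IsPlan μ ν π ∧ ∀ π' : X → X → ℝ, IsPlan μ ν π' → tcost c π ≤ tcost c π'

/-- A trim plan: optimal with support of minimal cardinality among optimal plans. -/
def IsTrim {X : Type*} [Fintype X] (c : X → X → ℝ) (μ ν : X → ℝ) (π : X → X → ℝ) : Prop :=
  IsOptimal c μ ν π ∧
    ∀ π' : X → X → ℝ, IsOptimal c μ ν π' → (spt π).card ≤ (spt π').card

/-- `L^∞` norm of the cost with respect to a plan: max of `c` on the support. -/
noncomputable def linf {X : Type*} [Fintype X] (c π : X → X → ℝ) : ℝ :=
  (((spt π).image (fun p => c p.1 p.2)).max).unbotD 0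

/-- Optimal transport cost `W_c(μ,ν)`. -/
noncomputable def Wc {X : Type*} [Fintype X] (c : X → X → ℝ) (μ ν : X → ℝ) : ℝ :=
  sInf {r | ∃ π, IsPlan μ ν π ∧ tcost c π = r}

/-- Infinity-Wasserstein cost `W_c^{(∞)}(μ,ν)`. -/
noncomputable def Winf {X : Type*} [Fintype X] (c : X → X → ℝ) (μ ν : X → ℝ) : ℝ :=
  sInf {r | ∃ π, IsPlan μ ν π ∧ linf c π = r}

/-- The deterministic plan `(Id, h)_# σ`. -/
def pushF {X : Type*} [DecidableEq X] (h : X → X) (σ : X → ℝ) : X → X → ℝ :=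
  fun x y => if h x = y then σ x else 0

/-- The deterministic plan `(h, Id)_# σ`. -/
def pushB {X : Type*} [DecidableEq X] (h : X → X) (σ : X → ℝ) : X → X → ℝ :=
  fun x y => if h y = x then σ y else 0

/-- `W^{(∞)}_c(μ,ν) ≤ W_{c^p}(μ,ν)^{1/p} / α_p^{1/p}` where `α_p` is the
minimal diffusive atom mass of a diffusive model of a trim plan for the cost `c^p`. -/
theorem Winf_le_Wcp_div_alpha {X : Type*} [Fintype X] [DecidableEq X]
    (μ ν : X → ℝ) (c : X → X → ℝ) (p : ℝ) (π : X → X → ℝ)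
    (hμ0 : ∀ x, 0 ≤ μ x) (hν0 : ∀ y, 0 ≤ ν y)
    (hμ1 : ∑ x, μ x = 1) (hν1 : ∑ y, ν y = 1)
    (hc : ∀ x y, 0 ≤ c x y) (hp : 1 ≤ p)
    (htrim : IsTrim (fun x y => c x y ^ p) μ ν π)
    (μd μc νd νc : X → ℝ) (h₁ h₂ : X → X)
    (hμd0 : ∀ x, 0 ≤ μd x) (hμc0 : ∀ x, 0 ≤ μc x)
    (hνd0 : ∀ y, 0 ≤ νd y) (hνc0 : ∀ y, 0 ≤ νc y)
    (hμdec : ∀ x, μ x = μd x + μc x) (hνdec : ∀ y, ν y = νd y + νc y)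
    (hdec : ∀ x y, π x y = pushF h₁ μd x y + pushB h₂ νd x y) :
    Winf c μ ν ≤
      (Wc (fun x y => c x y ^ p) μ ν) ^ (1 / p) /
        (((((msupp μd).image μd) ∪ ((msupp νd).image νd)).min).untopD 0) ^ (1 / p) := by
  classical
  set C : X → X → ℝ := fun x y => c x y ^ p with hC
  obtain ⟨⟨hπ0, hπμ, hπν⟩, hopt⟩ := htrim.1
  have hp0 : 0 < p := lt_of_lt_of_le one_pos hp
  -- the union of atom images is nonempty
  set S : Finset ℝ := ((msupp μd).image μd) ∪ ((msupp νd).image νd) with hS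
  have hSne : S.Nonempty := by
    by_contra h
    rw [Finset.not_nonempty_iff_eq_empty, Finset.union_eq_empty, Finset.image_eq_empty,
      Finset.image_eq_empty] at h
    have hμd : ∀ x, μd x = 0 := by
      intro x
      by_contra hx
      have : x ∈ msupp μd := by simp [msupp, hx]
      simp [h.1] at this
    have hνd : ∀ x, νd x = 0 := by
      intro x
      by_contra hx
      have : x ∈ msupp νd := by simp [msupp, hx]
      simp [h.2] at this
    have hπz : ∀ x y, π x y = 0 := by
      intro x y
      simp [hdec x y, pushF, pushB, hμd, hνd]
    have : (1 : ℝ) = 0 := by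
      rw [← hμ1]
      rw [Finset.sum_congr rfl (fun x _ => (hπμ x).symm)]
      simp [hπz]
    norm_num at this
  obtain ⟨a, ha⟩ := Finset.min_of_nonempty hSne
  have haS : a ∈ S := Finset.mem_of_min ha
  set α : ℝ := (S.min).untopD 0 with hαdef
  have hαa : α = a := by rw [hαdef, ha]; rfl
  have hSpos : ∀ b ∈ S, 0 < b := by
    intro b hb
    rw [hS, Finset.mem_union] at hb
    rcases hb with hb | hb <;>
    · obtain ⟨x, hx, rfl⟩ := Finset.mem_image.mp hb
      simp only [msupp, Finset.mem_filter] at hx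
      first
        | exact lt_of_le_of_ne (hμd0 x) (Ne.symm hx.2)
        | exact lt_of_le_of_ne (hνd0 x) (Ne.symm hx.2)
  have hα0 : 0 < α := hαa ▸ hSpos a haS
  have hαle : ∀ b ∈ S, α ≤ b := by
    intro b hb
    have := Finset.min_le hb
    rw [ha] at this
    exact hαa ▸ WithTop.coe_le_coe.mp this
  -- α is a lower bound for π on its support
  have hαπ : ∀ x y, π x y ≠ 0 → α ≤ π x y := by
    intro x y hxy
    rw [hdec x y] at hxy ⊢
    simp only [pushF, pushB] at hxy ⊢
    by_cases h1 : h₁ x = y <;> by_cases h2 : h₂ y = x <;> simp [h1, h2] at hxy ⊢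
    · rcases (show μd x ≠ 0 ∨ νd y ≠ 0 by
        by_contra hh; push_neg at hh; exact hxy (by rw [hh.1, hh.2, add_zero])) with h | h
      · have : μd x ∈ S := Finset.mem_union_left _
          (Finset.mem_image.mpr ⟨x, by simp [msupp, h], rfl⟩)
        linarith [hαle _ this, hνd0 y]
      · have : νd y ∈ S := Finset.mem_union_right _
          (Finset.mem_image.mpr ⟨y, by simp [msupp, h], rfl⟩)
        linarith [hαle _ this, hμd0 x]
    · have : μd x ∈ S := Finset.mem_union_left _
        (Finset.mem_image.mpr ⟨x, by simp [msupp, hxy], rfl⟩)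
      exact hαle _ this
    · have : νd y ∈ S := Finset.mem_union_right _
        (Finset.mem_image.mpr ⟨y, by simp [msupp, hxy], rfl⟩)
      exact hαle _ this
  -- Wc equals tcost of π
  have hCnn : ∀ x y, 0 ≤ C x y := fun x y => Real.rpow_nonneg (hc x y) p
  have htc0 : 0 ≤ tcost C π := by
    apply Finset.sum_nonneg; intro x _
    exact Finset.sum_nonneg fun y _ => mul_nonneg (hCnn x y) (hπ0 x y)
  have hmem : tcost C π ∈ {r | ∃ π', IsPlan μ ν π' ∧ tcost C π' = r} :=
    ⟨π, ⟨hπ0, hπμ, hπν⟩, rfl⟩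
  have hWc : Wc C μ ν = tcost C π := by
    apply le_antisymm
    · exact csInf_le ⟨tcost C π, fun r ⟨π', h', hr⟩ => hr ▸ hopt π' h'⟩ hmem
    · exact le_csInf ⟨_, hmem⟩ fun r ⟨π', h', hr⟩ => hr ▸ hopt π' h'
  -- bound on each cost value in the support
  set B : ℝ := (tcost C π) ^ (1 / p) / α ^ (1 / p) with hB
  have hB0 : 0 ≤ B := by positivity
  have hbound : ∀ x y, π x y ≠ 0 → c x y ≤ B := by
    intro x y hxy
    have hterm : C x y * α ≤ tcost C π := by
      have h1 : C x y * α ≤ C x y * π x y :=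
        mul_le_mul_of_nonneg_left (hαπ x y hxy) (hCnn x y)
      have h2 : C x y * π x y ≤ ∑ y', C x y' * π x y' :=
        Finset.single_le_sum (f := fun y' => C x y' * π x y')
          (fun y' _ => mul_nonneg (hCnn x y') (hπ0 x y')) (Finset.mem_univ y)
      have h3 : ∑ y', C x y' * π x y' ≤ tcost C π :=
        Finset.single_le_sum (f := fun x' => ∑ y', C x' y' * π x' y')
          (fun x' _ => Finset.sum_nonneg fun y' _ => mul_nonneg (hCnn x' y') (hπ0 x' y'))
          (Finset.mem_univ x)
      linarith
    have hcp : C x y ≤ tcost C π / α := (le_div_iff₀ hα0).mpr hterm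
    have := Real.rpow_le_rpow (hCnn x y) hcp (le_of_lt (by positivity : (0:ℝ) < 1 / p))
    rwa [hC, one_div, Real.rpow_rpow_inv (hc x y) (ne_of_gt hp0),
      Real.div_rpow htc0 (le_of_lt hα0), ← one_div, ← hB] at this
  -- linf of π is at most B
  have hlinf : linf c π ≤ B := by
    rw [linf]
    cases hmax : (((spt π).image (fun q => c q.1 q.2)).max) with
    | bot => simpa using hB0
    | coe b =>
      have hbmem := Finset.mem_of_max hmax
      obtain ⟨q, hq, rfl⟩ := Finset.mem_image.mp hbmem
      simp only [spt, Finset.mem_filter] at hq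
      simpa using hbound q.1 q.2 hq.2
  -- linf is always nonnegative
  have hlinf0 : ∀ π' : X → X → ℝ, 0 ≤ linf c π' := by
    intro π'
    rw [linf]
    cases hmax : (((spt π').image (fun q => c q.1 q.2)).max) with
    | bot => simp
    | coe b =>
      have hbmem := Finset.mem_of_max hmax
      obtain ⟨q, hq, rfl⟩ := Finset.mem_image.mp hbmem
      simpa using hc q.1 q.2
  have hWinf : Winf c μ ν ≤ linf c π :=
    csInf_le ⟨0, fun r ⟨π', _, hr⟩ => hr ▸ hlinf0 π'⟩ ⟨π, ⟨hπ0, hπμ, hπν⟩, rfl⟩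
  calc Winf c μ ν ≤ B := le_trans hWinf hlinf
    _ = _ := by rw [hB, hWc, hαdef, hS]
end

section
/- If π is a transportation plan between discrete measures μ, ν each supported on n points, and #spt(π) ≤ 2n − 1, then there exists x̄ ∈ spt(μ) such that π(x̄, ·) is supported on a single point ȳ, and there exists y ∈ spt(ν) such that π(·, y) is supported on a single point; moreover in the first case μ_{x̄} = π_{x̄,ȳ} ≤ ν_{ȳ}. -/
open Finset

open Classical in
lemma aux_single_row {X : Type*} [Fintype X]
    (μ ν : X → ℝ) (π : X → X → ℝ) (n : ℕ) (hn : 0 < n)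
    (hμn : (msupp μ).card = n)
    (hplan : IsPlan μ ν π)
    (hcard : (spt π).card ≤ 2 * n - 1) :
    ∃ x₀, μ x₀ ≠ 0 ∧ ∃ y₀, π x₀ y₀ ≠ 0 ∧ ∀ y', π x₀ y' ≠ 0 → y' = y₀ := by
  obtain ⟨hpos, hrow, hcol⟩ := hplan
  have hsubμ : ∀ p ∈ spt π, p.1 ∈ msupp μ := by
    intro p hp
    simp only [spt, Finset.mem_filter, Finset.mem_univ, true_and] at hp
    simp only [msupp, Finset.mem_filter, Finset.mem_univ, true_and]
    intro h
    have hz := (Finset.sum_eq_zero_iff_of_nonneg (fun y _ => hpos p.1 y)).mp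
      ((hrow p.1).trans h)
    exact hp (hz p.2 (Finset.mem_univ _))
  have hcount : (spt π).card = ∑ x ∈ msupp μ, ((spt π).filter (fun p => p.1 = x)).card :=
    Finset.card_eq_sum_card_fiberwise hsubμ
  have hfib1 : ∀ x ∈ msupp μ, 1 ≤ ((spt π).filter (fun p => p.1 = x)).card := by
    intro x hx
    simp only [msupp, Finset.mem_filter, Finset.mem_univ, true_and] at hx
    have : ∑ y, π x y ≠ 0 := by rw [hrow x]; exact hx
    obtain ⟨y, _, hy⟩ := Finset.exists_ne_zero_of_sum_ne_zero this
    have : (x, y) ∈ (spt π).filter (fun p => p.1 = x) := by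
      simp [spt, hy]
    exact Finset.card_pos.mpr ⟨_, this⟩
  -- some fiber has exactly one element
  have : ∃ x ∈ msupp μ, ((spt π).filter (fun p => p.1 = x)).card = 1 := by
    by_contra hcon
    push_neg at hcon
    have h2 : ∀ x ∈ msupp μ, 2 ≤ ((spt π).filter (fun p => p.1 = x)).card := by
      intro x hx
      have h1 := hfib1 x hx
      have := hcon x hx
      omega
    have : 2 * n ≤ (spt π).card := by
      calc 2 * n = ∑ _x ∈ msupp μ, 2 := by rw [Finset.sum_const, hμn]; ring
        _ ≤ ∑ x ∈ msupp μ, ((spt π).filter (fun p => p.1 = x)).card :=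
            Finset.sum_le_sum h2
        _ = (spt π).card := hcount.symm
    omega
  obtain ⟨x₀, hx₀, hone⟩ := this
  obtain ⟨p, hp⟩ := Finset.card_eq_one.mp hone
  have hpmem : p ∈ (spt π).filter (fun q => q.1 = x₀) := by rw [hp]; exact Finset.mem_singleton_self _
  simp only [Finset.mem_filter, spt, Finset.mem_univ, true_and] at hpmem
  obtain ⟨hpne, hp1⟩ := hpmem
  refine ⟨x₀, ?_, p.2, by rwa [← hp1], ?_⟩
  · simpa [msupp] using hx₀
  · intro y' hy'
    have : (x₀, y') ∈ (spt π).filter (fun q => q.1 = x₀) := by simp [spt, hy']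
    rw [hp, Finset.mem_singleton] at this
    exact congrArg Prod.snd this

/-- pigeonhole — if a plan between measures with `n`-point supports has
support of cardinality at most `2n - 1`, some row and some column of the plan each
contain exactly one support point; in the row case `μ x̄ = π x̄ ȳ ≤ ν ȳ`. -/
theorem pigeonhole_single_row_and_column {X : Type*} [Fintype X]
    (μ ν : X → ℝ) (π : X → X → ℝ) (n : ℕ) (hn : 0 < n)
    (hμn : (msupp μ).card = n) (hνn : (msupp ν).card = n)
    (hplan : IsPlan μ ν π)
    (hcard : (spt π).card ≤ 2 * n - 1) :
    (∃ x₀, μ x₀ ≠ 0 ∧ ∃ y₀, π x₀ y₀ ≠ 0 ∧ (∀ y', π x₀ y' ≠ 0 → y' = y₀) ∧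
      μ x₀ = π x₀ y₀ ∧ π x₀ y₀ ≤ ν y₀) ∧
    (∃ y₁, ν y₁ ≠ 0 ∧ ∃! x₁, π x₁ y₁ ≠ 0) := by
  classical
  obtain ⟨hpos, hrow, hcol⟩ := hplan
  constructor
  · obtain ⟨x₀, hμx₀, y₀, hπ, huniq⟩ :=
      aux_single_row μ ν π n hn hμn ⟨hpos, hrow, hcol⟩ hcard
    have hμeq : μ x₀ = π x₀ y₀ := by
      rw [← hrow x₀]
      exact Finset.sum_eq_single y₀
        (fun y _ hy => by_contra fun h => hy (huniq y h))
        (fun h => absurd (Finset.mem_univ y₀) h)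
    have hle : π x₀ y₀ ≤ ν y₀ := by
      rw [← hcol y₀]
      exact Finset.single_le_sum (fun x _ => hpos x y₀) (Finset.mem_univ x₀)
    exact ⟨x₀, hμx₀, y₀, hπ, huniq, hμeq, hle⟩
  · -- apply the row lemma to the transposed plan
    set π' : X → X → ℝ := fun x y => π y x with hπ'
    have hplan' : IsPlan ν μ π' :=
      ⟨fun x y => hpos y x, fun x => hcol x, fun y => hrow y⟩
    have hspt : spt π' = (spt π).image Prod.swap := by
      ext p
      simp only [spt, Finset.mem_filter, Finset.mem_univ, true_and, Finset.mem_image,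
        Prod.exists]
      constructor
      · intro h; exact ⟨p.2, p.1, h, rfl⟩
      · rintro ⟨a, b, h, rfl⟩; exact h
    have hcard' : (spt π').card ≤ 2 * n - 1 := by
      rw [hspt, Finset.card_image_of_injective _ Prod.swap_injective]
      exact hcard
    obtain ⟨y₁, hνy₁, x₁, hπ₁, huniq₁⟩ :=
      aux_single_row ν μ π' n hn hνn hplan' hcard'
    exact ⟨y₁, hνy₁, x₁, hπ₁, huniq₁⟩
end
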